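/- Define φ : ℝ² → ℝ by φ(a,b) = √(ab) if a,b ≥ 0 and φ(a,b) = min{a,b} otherwise. For each integer n ≥ 2, let μ(n) = φ(n,1) − φ(n−1,1) − φ(1,0) = n(1/√n − 1/√(n−1)) + 1/√(n−1). Then μ(n) ∼ 1/√n (i.e., there exist positive constants B, C with B/√n ≤ μ(n) ≤ C/√n for all large n), and consequently the series Σ_{n ≥ 2} μ(n)² diverges. -/

import Mathlib

/-- The conical function on ℝ² mimicking a cusp at the origin:
`φ(a,b) = √(ab)` if `a,b ≥ 0` and `min a b` otherwise. -/
noncomputable def phiCusp (p : ℝ × ℝ) : ℝ :=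
  if 0 ≤ p.1 ∧ 0 ≤ p.2 then Real.sqrt (p.1 * p.2) else min p.1 p.2

/-- The jumping numbers of the associated toric ℝ-b-divisor along `(n,1)`. -/
noncomputable def muCusp (n : ℕ) : ℝ :=
  phiCusp ((n : ℝ), 1) - phiCusp ((n : ℝ) - 1, 1) - phiCusp (1, 0)

lemma muCusp_eq (n : ℕ) (hn : 1 ≤ n) :
    muCusp n = Real.sqrt n - Real.sqrt ((n : ℝ) - 1) := by
  have h1 : (1 : ℝ) ≤ n := by exact_mod_cast hn
  have h0 : (0 : ℝ) ≤ (n : ℝ) - 1 := by linarith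
  simp [muCusp, phiCusp, h0, Nat.cast_nonneg, mul_one]

lemma muCusp_lower (n : ℕ) (hn : 1 ≤ n) :
    (1/2) / Real.sqrt n ≤ muCusp n := by
  have h1 : (1 : ℝ) ≤ n := by exact_mod_cast hn
  rw [muCusp_eq n hn]
  set t := Real.sqrt n with ht
  set s := Real.sqrt ((n : ℝ) - 1) with hs
  have htpos : 0 < t := Real.sqrt_pos.2 (by linarith)
  have ht2 : t ^ 2 = n := Real.sq_sqrt (by linarith)
  have hs2 : s ^ 2 = (n : ℝ) - 1 := Real.sq_sqrt (by linarith)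
  have hsn : 0 ≤ s := Real.sqrt_nonneg _
  rw [div_le_iff₀ htpos]
  nlinarith [sq_nonneg (t - s)]

lemma muCusp_upper (n : ℕ) (hn : 1 ≤ n) :
    muCusp n ≤ 1 / Real.sqrt n := by
  have h1 : (1 : ℝ) ≤ n := by exact_mod_cast hn
  rw [muCusp_eq n hn]
  set t := Real.sqrt n with ht
  set s := Real.sqrt ((n : ℝ) - 1) with hs
  have htpos : 0 < t := Real.sqrt_pos.2 (by linarith)
  have ht2 : t ^ 2 = n := Real.sq_sqrt (by linarith)
  have hs2 : s ^ 2 = (n : ℝ) - 1 := Real.sq_sqrt (by linarith)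
  have hsn : 0 ≤ s := Real.sqrt_nonneg _
  rw [← sub_nonneg]
  have : 1 / t - (t - s) = (s * (t - s)) / t := by
    field_simp
    nlinarith
  rw [this]
  have hts : s ≤ t := Real.sqrt_le_sqrt (by linarith)
  exact div_nonneg (mul_nonneg hsn (sub_nonneg.2 hts)) htpos.le

theorem muCusp_asymptotics_and_divergence :
    (∀ n : ℕ, 2 ≤ n →
        muCusp n = (n : ℝ) * (1 / Real.sqrt n - 1 / Real.sqrt ((n : ℝ) - 1)) +
          1 / Real.sqrt ((n : ℝ) - 1)) ∧
      (∃ B C : ℝ, 0 < B ∧ 0 < C ∧ ∃ N : ℕ, ∀ n : ℕ, N ≤ n →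
        B / Real.sqrt n ≤ muCusp n ∧ muCusp n ≤ C / Real.sqrt n) ∧
      ¬ Summable (fun n : ℕ => (muCusp n) ^ 2) := by
  refine ⟨?_, ⟨1/2, 1, by norm_num, by norm_num, 1, fun n hn =>
    ⟨muCusp_lower n hn, muCusp_upper n hn⟩⟩, ?_⟩
  · intro n hn
    have h2 : (2 : ℝ) ≤ n := by exact_mod_cast hn
    rw [muCusp_eq n (by omega)]
    set t := Real.sqrt n with ht
    set s := Real.sqrt ((n : ℝ) - 1) with hs
    have htpos : 0 < t := Real.sqrt_pos.2 (by linarith)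
    have hspos : 0 < s := Real.sqrt_pos.2 (by linarith)
    have ht2 : t ^ 2 = n := Real.sq_sqrt (by linarith)
    have hs2 : s ^ 2 = (n : ℝ) - 1 := Real.sq_sqrt (by linarith)
    field_simp
    linear_combination s * ht2 - t * hs2
  · intro h
    have key : ∀ n : ℕ, 1 / (4 * (n : ℝ)) ≤ muCusp n ^ 2 := by
      intro n
      rcases Nat.eq_zero_or_pos n with rfl | hn
      · have : muCusp 0 = 1 := by
          norm_num [muCusp, phiCusp]
        simp [this]
      · have hlow := muCusp_lower n hn
        have h1 : (1 : ℝ) ≤ n := by exact_mod_cast hn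
        have htpos : 0 < Real.sqrt n := Real.sqrt_pos.2 (by linarith)
        have ht2 : Real.sqrt n ^ 2 = n := Real.sq_sqrt (by linarith)
        have hnn : 0 ≤ (1/2) / Real.sqrt n := by positivity
        have := pow_le_pow_left₀ hnn hlow 2
        calc 1 / (4 * (n : ℝ)) = ((1/2) / Real.sqrt n) ^ 2 := by
              rw [div_pow, ht2]; ring
          _ ≤ muCusp n ^ 2 := this
    have hsum : Summable (fun n : ℕ => 1 / (4 * (n : ℝ))) :=
      Summable.of_nonneg_of_le (fun n => by positivity) key h
    have : Summable (fun n : ℕ => 1 / (n : ℝ)) := by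
      have := hsum.mul_left 4
      refine this.congr (fun n => ?_)
      rcases Nat.eq_zero_or_pos n with rfl | hn
      · simp
      · have : (0:ℝ) < n := by exact_mod_cast hn
        field_simp
    exact Real.not_summable_one_div_natCast this
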